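/- Let 0 < r < 1 and let f = (…,0, f₀=0, f₁=1, 0,…) ∈ H²(Ω_r, ℂ) (i.e., f_1 = 1 and all other coefficients 0). Let M_z^{t*} be the adjoint of the shift M_z^t, so that M_z^{t*}f = (…,0, f₀' = r², 0,…) and (M_z^{t*})²f = (…, −r² at position −1, 0, …). Then for any 0 < s < 1, (1+s²)‖M_z^{t*}f‖² − ‖(M_z^{t*})²f‖² − s²‖f‖² = −s²r² < 0. -/

import Mathlib

lemma tsum_single_aux (w : ℤ → ℝ) (v : ℤ → ℂ) (k : ℤ) (hv : ∀ n ≠ k, v n = 0) :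
    ∑' n : ℤ, w n * ‖v n‖ ^ 2 = w k * ‖v k‖ ^ 2 := by
  apply tsum_eq_single
  intro b hb
  rw [hv b hb]
  simp

/-- In `H²(Ω_r, ℂ)` (two-sided sequences with
`‖f‖² = (1-r²)⁻¹(Σ_{n≥0} r^{2n}|f_n|² + Σ_{n<0}|f_n|²)`), for the sequence `f` with
`f₁ = 1` and all other entries `0`, and the adjoint shift `g = M_z^{t*}` acting by
`(g f)_{-1} = -f₀`, `(g f)_n = r² f_{n+1}` for `n ≥ 0`, `(g f)_n = f_{n+1}` for `n < -1`,
one has `(1+s²)‖g f‖² - ‖g² f‖² - s²‖f‖² = -s²r² < 0` for every `0 < s < 1`. -/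
theorem stmt17 (r s : ℝ) (hr0 : 0 < r) (hr1 : r < 1) (hs0 : 0 < s) (hs1 : s < 1)
    (Nsq : (ℤ → ℂ) → ℝ)
    (hN : ∀ f : ℤ → ℂ, Nsq f
      = (1 - r ^ 2)⁻¹ * ∑' n : ℤ, (if 0 ≤ n then r ^ (2 * n) else 1) * ‖f n‖ ^ 2)
    (g : (ℤ → ℂ) → (ℤ → ℂ))
    (hg : ∀ (f : ℤ → ℂ) (n : ℤ), g f n
      = if n = -1 then -f 0 else if 0 ≤ n then ((r : ℂ)) ^ 2 * f (n + 1) else f (n + 1))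
    (f : ℤ → ℂ) (hf : ∀ n : ℤ, f n = if n = 1 then 1 else 0) :
    (1 + s ^ 2) * Nsq (g f) - Nsq (g (g f)) - s ^ 2 * Nsq f = -(s ^ 2 * r ^ 2)
      ∧ -(s ^ 2 * r ^ 2) < 0 := by
  have hgf : ∀ n : ℤ, g f n = if n = 0 then (r : ℂ) ^ 2 else 0 := by
    intro n
    rw [hg]
    rw [hf 0, hf (n + 1)]
    split_ifs <;> simp_all <;> omega
  have hggf : ∀ n : ℤ, g (g f) n = if n = -1 then -(r : ℂ) ^ 2 else 0 := by
    intro n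
    rw [hg]
    rw [hgf 0, hgf (n + 1)]
    split_ifs <;> simp_all <;> omega
  have hr2 : (1 : ℝ) - r ^ 2 ≠ 0 := by nlinarith
  have N1 : Nsq f = (1 - r ^ 2)⁻¹ * r ^ 2 := by
    rw [hN, tsum_single_aux _ _ 1 (by intro n hn; rw [hf]; simp [hn])]
    rw [hf]
    norm_num
  have N2 : Nsq (g f) = (1 - r ^ 2)⁻¹ * r ^ 4 := by
    rw [hN, tsum_single_aux _ _ 0 (by intro n hn; rw [hgf]; simp [hn])]
    rw [hgf]
    simp [abs_of_pos hr0]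
    left; push_cast; ring
  have N3 : Nsq (g (g f)) = (1 - r ^ 2)⁻¹ * r ^ 4 := by
    rw [hN, tsum_single_aux _ _ (-1) (by intro n hn; rw [hggf]; simp [hn])]
    rw [hggf]
    norm_num [abs_of_pos hr0]
    left; push_cast; ring
  constructor
  · rw [N1, N2, N3]
    field_simp
    ring
  · have : 0 < s ^ 2 * r ^ 2 := by positivity
    linarith
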